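/- In a median graph G with basepoint v0, every vertex v together with all its predecessors (neighbors of v in I(v0,v)) belongs to a single hypercube subgraph of G (the downward cube property). -/

import Mathlib

def interval {V : Type*} (G : SimpleGraph V) (u v : V) : Set V :=
  {x | G.dist u x + G.dist x v = G.dist u v}

namespace DCP

variable {V : Type*} {G : SimpleGraph V}

abbrev Med (G : SimpleGraph V) : Prop := ∀ x y z : V,
    ∃! m : V, m ∈ interval G x y ∧ m ∈ interval G y z ∧ m ∈ interval G z x

lemma mem_interval {u v x : V} :
    x ∈ interval G u v ↔ G.dist u x + G.dist x v = G.dist u v := Iff.rfl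

noncomputable def med (hm : Med G) (x y z : V) : V := (hm x y z).exists.choose

lemma med_spec (hm : Med G) (x y z : V) :
    med hm x y z ∈ interval G x y ∧ med hm x y z ∈ interval G y z ∧
      med hm x y z ∈ interval G z x :=
  (hm x y z).exists.choose_spec

lemma eq_med (hm : Med G) {x y z m : V} (h1 : m ∈ interval G x y)
    (h2 : m ∈ interval G y z) (h3 : m ∈ interval G z x) : m = med hm x y z :=
  (hm x y z).unique ⟨h1, h2, h3⟩ (med_spec hm x y z)

/-- The basepoint order: `x ≤ y` iff `x` lies on a geodesic from `v0` to `y`. -/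
def Le (G : SimpleGraph V) (v0 x y : V) : Prop :=
  G.dist v0 x + G.dist x y = G.dist v0 y

lemma le_refl (v0 x : V) : Le G v0 x x := by simp [Le, SimpleGraph.dist_self]

lemma le_trans (hc : G.Connected) {v0 x y z : V} (h1 : Le G v0 x y) (h2 : Le G v0 y z) :
    Le G v0 x z := by
  have t1 := hc.dist_triangle (u := x) (v := y) (w := z)
  have t2 := hc.dist_triangle (u := v0) (v := x) (w := z)
  unfold Le at *
  omega

lemma le_antisymm (hc : G.Connected) {v0 x y : V} (h1 : Le G v0 x y) (h2 : Le G v0 y x) :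
    x = y := by
  have hxy : G.dist x y = G.dist y x := SimpleGraph.dist_comm ..
  have : G.dist x y = 0 := by unfold Le at *; omega
  exact (hc.dist_eq_zero_iff).mp this

/-- meet with respect to the basepoint -/
noncomputable def meet (hm : Med G) (v0 x y : V) : V := med hm v0 x y

lemma meet_le_left (hm : Med G) (v0 x y : V) : Le G v0 (meet hm v0 x y) x :=
  (med_spec hm v0 x y).1

lemma meet_le_right (hm : Med G) (v0 x y : V) : Le G v0 (meet hm v0 x y) y := by
  have h := (med_spec hm v0 x y).2.2
  rw [mem_interval] at h
  have c1 : G.dist y (med hm v0 x y) = G.dist (med hm v0 x y) y := SimpleGraph.dist_comm ..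
  have c2 : G.dist (med hm v0 x y) v0 = G.dist v0 (med hm v0 x y) := SimpleGraph.dist_comm ..
  have c3 : G.dist y v0 = G.dist v0 y := SimpleGraph.dist_comm ..
  show G.dist v0 (med hm v0 x y) + G.dist (med hm v0 x y) y = G.dist v0 y
  omega

lemma meet_mem (hm : Med G) (v0 x y : V) : meet hm v0 x y ∈ interval G x y :=
  (med_spec hm v0 x y).2.1

lemma dist_formula (hm : Med G) (v0 x y : V) :
    G.dist x y + 2 * G.dist v0 (meet hm v0 x y) = G.dist v0 x + G.dist v0 y := by
  have h1 := (med_spec hm v0 x y).1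
  have h2 := (med_spec hm v0 x y).2.1
  have h3 := (med_spec hm v0 x y).2.2
  rw [mem_interval] at h1 h2 h3
  have c1 : G.dist y (med hm v0 x y) = G.dist (med hm v0 x y) y := SimpleGraph.dist_comm ..
  have c2 : G.dist (med hm v0 x y) v0 = G.dist v0 (med hm v0 x y) := SimpleGraph.dist_comm ..
  have c3 : G.dist y v0 = G.dist v0 y := SimpleGraph.dist_comm ..
  have c4 : G.dist x (med hm v0 x y) = G.dist (med hm v0 x y) x := SimpleGraph.dist_comm ..
  have c5 : G.dist v0 (med hm v0 x y) = G.dist (med hm v0 x y) v0 := SimpleGraph.dist_comm ..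
  show G.dist x y + 2 * G.dist v0 (med hm v0 x y) = G.dist v0 x + G.dist v0 y
  omega

lemma eq_meet (hm : Med G) {v0 x y m : V} (h1 : m ∈ interval G v0 x)
    (h2 : m ∈ interval G x y) (h3 : m ∈ interval G y v0) : m = meet hm v0 x y :=
  eq_med hm h1 h2 h3

lemma le_meet (hm : Med G) (hc : G.Connected) {v0 x y z : V}
    (hx : Le G v0 z x) (hy : Le G v0 z y) : Le G v0 z (meet hm v0 x y) := by
  have h1 := (med_spec hm z x y).1
  have h2 := (med_spec hm z x y).2.1
  have h3 := (med_spec hm z x y).2.2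
  rw [mem_interval] at h1 h2 h3
  set q := med hm z x y with hq
  rw [SimpleGraph.dist_comm (u := y) (v := q), SimpleGraph.dist_comm (u := q) (v := z),
    SimpleGraph.dist_comm (u := y) (v := z)] at h3
  have t1 : G.dist v0 q ≤ G.dist v0 z + G.dist z q := hc.dist_triangle
  have t2 : G.dist v0 x ≤ G.dist v0 q + G.dist q x := hc.dist_triangle
  have t3 : G.dist v0 y ≤ G.dist v0 q + G.dist q y := hc.dist_triangle
  unfold Le at hx hy
  have hzq : G.dist v0 z + G.dist z q = G.dist v0 q := by omega
  have hqx : G.dist v0 q + G.dist q x = G.dist v0 x := by omega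
  have hqy : G.dist v0 q + G.dist q y = G.dist v0 y := by omega
  have : q = meet hm v0 x y := by
    refine eq_meet hm hqx h2 ?_
    rw [mem_interval, SimpleGraph.dist_comm (u := y) (v := q),
      SimpleGraph.dist_comm (u := q) (v := v0), SimpleGraph.dist_comm (u := y) (v := v0)]
    omega
  rw [← this]
  exact hzq

lemma interval_comm {u v : V} : interval G u v = interval G v u := by
  ext x
  rw [mem_interval, mem_interval, SimpleGraph.dist_comm (u := u) (v := x),
    SimpleGraph.dist_comm (u := x) (v := v), SimpleGraph.dist_comm (u := u) (v := v)]
  omega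

lemma meet_comm (hm : Med G) (v0 x y : V) : meet hm v0 x y = meet hm v0 y x := by
  refine eq_meet hm ?_ ?_ ?_
  · have := meet_le_right hm v0 x y
    exact this
  · rw [interval_comm]; exact meet_mem hm v0 x y
  · have h := (med_spec hm v0 x y).1
    rw [interval_comm]
    exact h

lemma meet_eq_left (hm : Med G) {v0 x y : V} (h : Le G v0 x y) : meet hm v0 x y = x := by
  symm
  refine eq_meet hm (le_refl v0 x) ?_ ?_
  · rw [mem_interval, SimpleGraph.dist_self]; simp
  · rw [mem_interval, SimpleGraph.dist_comm (u := y) (v := x),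
      SimpleGraph.dist_comm (u := x) (v := v0), SimpleGraph.dist_comm (u := y) (v := v0)]
    unfold Le at h
    omega

lemma meet_idem (hm : Med G) (v0 x : V) : meet hm v0 x x = x :=
  meet_eq_left hm (le_refl v0 x)

lemma le_of_le_meet_left (hm : Med G) (hc : G.Connected) {v0 x y z : V}
    (h : Le G v0 z (meet hm v0 x y)) : Le G v0 z x :=
  le_trans hc h (meet_le_left hm v0 x y)

lemma le_of_le_meet_right (hm : Med G) (hc : G.Connected) {v0 x y z : V}
    (h : Le G v0 z (meet hm v0 x y)) : Le G v0 z y :=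
  le_trans hc h (meet_le_right hm v0 x y)

lemma meet_assoc (hm : Med G) (hc : G.Connected) (v0 x y z : V) :
    meet hm v0 (meet hm v0 x y) z = meet hm v0 x (meet hm v0 y z) := by
  apply le_antisymm hc
  · have h1 : Le G v0 (meet hm v0 (meet hm v0 x y) z) (meet hm v0 x y) :=
      meet_le_left ..
    refine le_meet hm hc (le_of_le_meet_left hm hc h1) (le_meet hm hc ?_ ?_)
    · exact le_of_le_meet_right hm hc h1
    · exact meet_le_right ..
  · have h1 : Le G v0 (meet hm v0 x (meet hm v0 y z)) (meet hm v0 y z) :=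
      meet_le_right ..
    refine le_meet hm hc (le_meet hm hc ?_ ?_) ?_
    · exact meet_le_left ..
    · exact le_of_le_meet_left hm hc h1
    · exact le_of_le_meet_right hm hc h1

lemma no_triangle (hm : Med G) (hc : G.Connected) {a b c : V}
    (hab : G.Adj a b) (hbc : G.Adj b c) (hca : G.Adj c a) : False := by
  obtain ⟨m, ⟨h1, h2, h3⟩, -⟩ := hm a b c
  rw [mem_interval] at h1 h2 h3
  have dab : G.dist a b = 1 := SimpleGraph.dist_eq_one_iff_adj.mpr hab
  have dbc : G.dist b c = 1 := SimpleGraph.dist_eq_one_iff_adj.mpr hbc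
  have dca : G.dist c a = 1 := SimpleGraph.dist_eq_one_iff_adj.mpr hca
  have ez : ∀ u w : V, G.dist u w = 0 → u = w := fun u w h => (hc.dist_eq_zero_iff).mp h
  have e1 : m = a ∨ m = b := by
    have : G.dist a m = 0 ∨ G.dist m b = 0 := by omega
    rcases this with h | h
    · exact Or.inl (ez a m h).symm
    · exact Or.inr (ez m b h)
  have e2 : m = b ∨ m = c := by
    have : G.dist b m = 0 ∨ G.dist m c = 0 := by omega
    rcases this with h | h
    · exact Or.inl (ez b m h).symm
    · exact Or.inr (ez m c h)
  have e3 : m = c ∨ m = a := by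
    have : G.dist c m = 0 ∨ G.dist m a = 0 := by omega
    rcases this with h | h
    · exact Or.inl (ez c m h).symm
    · exact Or.inr (ez m a h)
  have : a = b ∨ b = c ∨ c = a := by
    rcases e1 with h1' | h1'
    · rcases e2 with h2' | h2'
      · exact Or.inl (h1'.symm.trans h2')
      · exact Or.inr (Or.inr (h2'.symm.trans h1'))
    · rcases e2 with h2' | h2'
      · rcases e3 with h3' | h3'
        · exact Or.inr (Or.inl (h1'.symm.trans h3'))
        · exact Or.inl (h3'.symm.trans h1')
      · exact Or.inr (Or.inl (h1'.symm.trans h2'))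
  rcases this with h | h | h
  · exact hab.ne h
  · exact hbc.ne h
  · exact hca.ne h


section Cube

variable (hm : Med G) (hc : G.Connected) (v0 c : V) {n : ℕ} (u : Fin n → V)

noncomputable def FS (S : Finset (Fin n)) : V :=
  haveI : Std.Commutative (meet hm v0) := ⟨fun a b => meet_comm hm v0 a b⟩
  haveI : Std.Associative (meet hm v0) := ⟨fun a b d => meet_assoc hm hc v0 a b d⟩
  S.fold (meet hm v0) c u

lemma FS_empty : FS hm hc v0 c u ∅ = c := by
  haveI : Std.Commutative (meet hm v0) := ⟨fun a b => meet_comm hm v0 a b⟩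
  haveI : Std.Associative (meet hm v0) := ⟨fun a b d => meet_assoc hm hc v0 a b d⟩
  simp only [FS]
  exact Finset.fold_empty

lemma FS_insert (a : Fin n) (S : Finset (Fin n)) :
    FS hm hc v0 c u (insert a S) = meet hm v0 (u a) (FS hm hc v0 c u S) := by
  haveI : Std.Commutative (meet hm v0) := ⟨fun a b => meet_comm hm v0 a b⟩
  haveI : Std.Associative (meet hm v0) := ⟨fun a b d => meet_assoc hm hc v0 a b d⟩
  haveI : Std.IdempotentOp (meet hm v0) := ⟨fun a => meet_idem hm v0 a⟩
  simp only [FS]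
  exact Finset.fold_insert_idem

lemma FS_le (hle : ∀ i, Le G v0 (u i) c) (S : Finset (Fin n)) :
    Le G v0 (FS hm hc v0 c u S) c := by
  induction S using Finset.induction with
  | empty => rw [FS_empty]; exact le_refl v0 c
  | @insert a S ha ih =>
    rw [FS_insert]
    exact le_trans hc (meet_le_right ..) ih

lemma FS_union (hle : ∀ i, Le G v0 (u i) c) (S T : Finset (Fin n)) :
    FS hm hc v0 c u (S ∪ T) = meet hm v0 (FS hm hc v0 c u S) (FS hm hc v0 c u T) := by
  induction S using Finset.induction with
  | empty =>
    rw [Finset.empty_union, FS_empty, meet_comm, meet_eq_left hm (FS_le hm hc v0 c u hle T)]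
  | @insert a S ha ih =>
    rw [Finset.insert_union, FS_insert, FS_insert, ih, meet_assoc hm hc]

lemma FS_singleton (hle : ∀ i, Le G v0 (u i) c) (i : Fin n) :
    FS hm hc v0 c u {i} = u i := by
  rw [show ({i} : Finset (Fin n)) = insert i ∅ by simp, FS_insert, FS_empty,
    meet_eq_left hm (hle i)]


/-- The key inductive step: if `ui, ul` are distinct lower covers of `c`, and `p'` is an
element of rank `R c - k` below `c`, such that both `meet ui p'` and `p = meet ul p'` have
rank `R c - (k+1)`, then `meet ui p` has rank `R c - (k+2)`. -/
lemma step (hm : Med G) (hc : G.Connected) (v0 c ui ul p' p : V) (k : ℕ)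
    (hui_le : Le G v0 ui c) (hul_le : Le G v0 ul c)
    (hui_rk : G.dist v0 ui + 1 = G.dist v0 c) (hul_rk : G.dist v0 ul + 1 = G.dist v0 c)
    (hne : ui ≠ ul)
    (hp'c : Le G v0 p' c)
    (hp' : G.dist v0 p' + k = G.dist v0 c)
    (hp_def : p = meet hm v0 ul p')
    (hp : G.dist v0 p + (k+1) = G.dist v0 c)
    (ha : G.dist v0 (meet hm v0 ui p') + (k+1) = G.dist v0 c) :
    G.dist v0 (meet hm v0 ui p) + (k+2) = G.dist v0 c := by
  have dic : G.dist ui c = 1 := by have h1 := hui_le; unfold Le at h1; omega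
  have dlc : G.dist ul c = 1 := by have h1 := hul_le; unfold Le at h1; omega
  have adjic : G.Adj ui c := SimpleGraph.dist_eq_one_iff_adj.mp dic
  have adjlc : G.Adj ul c := SimpleGraph.dist_eq_one_iff_adj.mp dlc
  have dil : G.dist ui ul = 2 := by
    have htri : G.dist ui ul ≤ G.dist ui c + G.dist c ul := hc.dist_triangle
    have hcom : G.dist c ul = G.dist ul c := SimpleGraph.dist_comm ..
    have h0 : G.dist ui ul ≠ 0 := fun h => hne (hc.dist_eq_zero_iff.mp h)
    have h1 : G.dist ui ul ≠ 1 := fun h =>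
      no_triangle hm hc (SimpleGraph.dist_eq_one_iff_adj.mp h) adjlc adjic.symm
    omega
  have hei : Le G v0 (meet hm v0 ui p') ui := meet_le_left ..
  have hep' : Le G v0 (meet hm v0 ui p') p' := meet_le_right ..
  have hpp' : Le G v0 p p' := by rw [hp_def]; exact meet_le_right ..
  by_cases hap : meet hm v0 ui p' = p
  · -- degenerate case is impossible
    exfalso
    have hel : Le G v0 (meet hm v0 ui p') ul := by rw [hap, hp_def]; exact meet_le_left ..
    have hq_rank : G.dist v0 (meet hm v0 ui ul) + 2 = G.dist v0 c := by
      have hf := dist_formula hm v0 ui ul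
      omega
    have hqi : Le G v0 (meet hm v0 ui ul) ui := meet_le_left ..
    have hql : Le G v0 (meet hm v0 ui ul) ul := meet_le_right ..
    have hqe : Le G v0 (meet hm v0 ui p') (meet hm v0 ui ul) := le_meet hm hc hei hel
    have h1 : Le G v0 (meet hm v0 ui p') (meet hm v0 (meet hm v0 ui ul) p') :=
      le_meet hm hc hqe hep'
    have h2 : Le G v0 (meet hm v0 (meet hm v0 ui ul) p') (meet hm v0 ui p') := by
      refine le_meet hm hc ?_ (meet_le_right ..)
      exact le_trans hc (meet_le_left ..) hqi
    have heq : meet hm v0 (meet hm v0 ui ul) p' = meet hm v0 ui p' := le_antisymm hc h2 h1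
    have F1 := dist_formula hm v0 (meet hm v0 ui ul) p'
    rw [heq] at F1
    have F2 := dist_formula hm v0 ui p'
    have F3 := dist_formula hm v0 ul p'
    rw [← hp_def] at F3
    -- distance values
    have dqi : G.dist (meet hm v0 ui ul) ui = 1 := by
      have h := hqi; unfold Le at h; omega
    have dql : G.dist (meet hm v0 ui ul) ul = 1 := by
      have h := hql; unfold Le at h; omega
    have dp'c : G.dist p' c + G.dist v0 p' = G.dist v0 c := by
      have h := hp'c; unfold Le at h; omega
    -- both (meet ui ul) and c are medians of the triple (ui, ul, p')
    obtain ⟨mmm, -, hmuniq⟩ := hm ui ul p'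
    have com1 : G.dist ui (meet hm v0 ui ul) = G.dist (meet hm v0 ui ul) ui :=
      SimpleGraph.dist_comm ..
    have com1x : G.dist ul (meet hm v0 ui ul) = G.dist (meet hm v0 ui ul) ul :=
      SimpleGraph.dist_comm ..
    have com2 : G.dist p' (meet hm v0 ui ul) = G.dist (meet hm v0 ui ul) p' :=
      SimpleGraph.dist_comm ..
    have com2' : G.dist (meet hm v0 ui ul) p' = G.dist p' (meet hm v0 ui ul) :=
      SimpleGraph.dist_comm ..
    have com3 : G.dist p' ui = G.dist ui p' := SimpleGraph.dist_comm ..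
    have com4 : G.dist c ul = G.dist ul c := SimpleGraph.dist_comm ..
    have com5 : G.dist c p' = G.dist p' c := SimpleGraph.dist_comm ..
    have com6 : G.dist c ui = G.dist ui c := SimpleGraph.dist_comm ..
    have hq_is : meet hm v0 ui ul = mmm := by
      refine hmuniq _ ⟨meet_mem hm v0 ui ul, ?_, ?_⟩ <;> rw [mem_interval] <;> omega
    have hc_is : c = mmm := by
      refine hmuniq _ ⟨?_, ?_, ?_⟩ <;> rw [mem_interval] <;> omega
    rw [← hc_is] at hq_is
    rw [hq_is] at hq_rank
    omega
  · -- generic case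
    have dap' : G.dist (meet hm v0 ui p') p' = 1 := by
      have h := hep'; unfold Le at h; omega
    have dpp' : G.dist p p' = 1 := by
      have h := hpp'; unfold Le at h; omega
    have adj1 : G.Adj (meet hm v0 ui p') p' := SimpleGraph.dist_eq_one_iff_adj.mp dap'
    have adj2 : G.Adj p p' := SimpleGraph.dist_eq_one_iff_adj.mp dpp'
    have dap : G.dist (meet hm v0 ui p') p = 2 := by
      have htri : G.dist (meet hm v0 ui p') p ≤ G.dist (meet hm v0 ui p') p' + G.dist p' p :=
        hc.dist_triangle
      have hcom : G.dist p' p = G.dist p p' := SimpleGraph.dist_comm ..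
      have h0 : G.dist (meet hm v0 ui p') p ≠ 0 := fun h => hap (hc.dist_eq_zero_iff.mp h)
      have h1 : G.dist (meet hm v0 ui p') p ≠ 1 := fun h =>
        no_triangle hm hc (SimpleGraph.dist_eq_one_iff_adj.mp h) adj2 adj1.symm
      omega
    have F := dist_formula hm v0 (meet hm v0 ui p') p
    have hmm_eq : meet hm v0 (meet hm v0 ui p') p = meet hm v0 ui p := by
      apply le_antisymm hc
      · refine le_meet hm hc ?_ (meet_le_right ..)
        exact le_trans hc (meet_le_left ..) hei
      · refine le_meet hm hc (le_meet hm hc (meet_le_left ..) ?_) (meet_le_right ..)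
        exact le_trans hc (meet_le_right ..) hpp'
    rw [hmm_eq] at F
    omega


lemma FS_rank (hinj : Function.Injective u) (hle : ∀ i, Le G v0 (u i) c)
    (hrk : ∀ i, G.dist v0 (u i) + 1 = G.dist v0 c) (S : Finset (Fin n)) :
    G.dist v0 (FS hm hc v0 c u S) + S.card = G.dist v0 c := by
  suffices H : ∀ k (S : Finset (Fin n)), S.card = k →
      G.dist v0 (FS hm hc v0 c u S) + k = G.dist v0 c by
    have := H S.card S rfl
    omega
  intro k
  induction k using Nat.strong_induction_on with
  | _ k ih =>
  intro S hS
  match k, ih with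
  | 0, _ =>
    have hSe : S = ∅ := Finset.card_eq_zero.mp hS
    rw [hSe, FS_empty]
    omega
  | 1, _ =>
    obtain ⟨i, rfl⟩ := Finset.card_eq_one.mp hS
    rw [FS_singleton hm hc v0 c u hle i]
    exact hrk i
  | (k+2), ih =>
    obtain ⟨i, hi⟩ : S.Nonempty := Finset.card_pos.mp (by omega)
    have hTcard : (S.erase i).card = k + 1 := by
      rw [Finset.card_erase_of_mem hi, hS]
      omega
    have hS_eq : S = insert i (S.erase i) := (Finset.insert_erase hi).symm
    have hiT : i ∉ S.erase i := Finset.notMem_erase i S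
    obtain ⟨l, hl⟩ : (S.erase i).Nonempty := Finset.card_pos.mp (by omega)
    have hT'card : ((S.erase i).erase l).card = k := by
      rw [Finset.card_erase_of_mem hl, hTcard]
      omega
    have hT_eq : S.erase i = insert l ((S.erase i).erase l) := (Finset.insert_erase hl).symm
    have hiT' : i ∉ (S.erase i).erase l := fun h => hiT (Finset.erase_subset _ _ h)
    have hp' : G.dist v0 (FS hm hc v0 c u ((S.erase i).erase l)) + k = G.dist v0 c :=
      ih k (by omega) _ hT'card
    have hp : G.dist v0 (FS hm hc v0 c u (S.erase i)) + (k+1) = G.dist v0 c :=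
      ih (k+1) (by omega) _ hTcard
    have hacard : (insert i ((S.erase i).erase l)).card = k + 1 := by
      rw [Finset.card_insert_of_notMem hiT', hT'card]
    have ha : G.dist v0 (meet hm v0 (u i) (FS hm hc v0 c u ((S.erase i).erase l)))
        + (k+1) = G.dist v0 c := by
      rw [← FS_insert hm hc v0 c u i ((S.erase i).erase l)]
      exact ih (k+1) (by omega) _ hacard
    have hp_def : FS hm hc v0 c u (S.erase i)
        = meet hm v0 (u l) (FS hm hc v0 c u ((S.erase i).erase l)) := by
      conv_lhs => rw [hT_eq]
      exact FS_insert hm hc v0 c u l ((S.erase i).erase l)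
    have hil : u i ≠ u l := by
      intro h
      exact (Finset.ne_of_mem_erase hl) (hinj h).symm
    have key := step hm hc v0 c (u i) (u l) (FS hm hc v0 c u ((S.erase i).erase l))
      (FS hm hc v0 c u (S.erase i)) k (hle i) (hle l) (hrk i) (hrk l) hil
      (FS_le hm hc v0 c u hle ((S.erase i).erase l)) hp' hp_def hp ha
    rw [hS_eq, FS_insert hm hc v0 c u i (S.erase i)]
    exact key

end Cube

end DCP

def IsMedianGraph {V : Type*} (G : SimpleGraph V) : Prop :=
  G.Connected ∧ ∀ x y z : V,
    ∃! m : V, m ∈ interval G x y ∧ m ∈ interval G y z ∧ m ∈ interval G z x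

/-- The `k`-dimensional hypercube graph: vertices are `Fin k → Bool`, two vertices are
adjacent iff they differ in exactly one coordinate. -/
def cubeGraph (k : ℕ) : SimpleGraph (Fin k → Bool) :=
  SimpleGraph.fromRel (fun x y => ∃ i, x i ≠ y i ∧ ∀ j, j ≠ i → x j = y j)

open DCP in
/-- Downward cube property: every vertex `v` together with all its predecessors
(neighbors of `v` in `I(v0,v)`) lies in a single induced hypercube of `G`. -/
theorem downward_cube_property {V : Type*} [Fintype V] (G : SimpleGraph V)
    (hG : IsMedianGraph G) (v0 v : V) :
    ∃ (k : ℕ) (f : cubeGraph k ↪g G), v ∈ Set.range ⇑f ∧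
      {u : V | G.Adj u v ∧ u ∈ interval G v0 v} ⊆ Set.range ⇑f := by
  classical
  obtain ⟨hc, hm⟩ := hG
  have hm' : Med G := hm
  have hPfin : ({u : V | G.Adj u v ∧ u ∈ interval G v0 v}).Finite := Set.toFinite _
  set U : Finset V := hPfin.toFinset with hU
  set n := U.card with hn
  set e := U.equivFin with he
  set u : Fin n → V := fun i => ((e.symm i : U) : V) with hu
  have hmemU : ∀ i, G.Adj (u i) v ∧ (u i) ∈ interval G v0 v := fun i =>
    hPfin.mem_toFinset.mp (e.symm i).2
  have hu_inj : Function.Injective u := by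
    intro i j h
    exact e.symm.injective (Subtype.ext h)
  have hle : ∀ i, Le G v0 (u i) v := fun i => (hmemU i).2
  have hrk : ∀ i, G.dist v0 (u i) + 1 = G.dist v0 v := by
    intro i
    have h1 : G.dist (u i) v = 1 := SimpleGraph.dist_eq_one_iff_adj.mpr (hmemU i).1
    have h2 := hle i
    unfold Le at h2
    omega
  -- distance between cube points
  have hdist : ∀ x y : Fin n → Bool,
      G.dist (FS hm' hc v0 v u (Finset.univ.filter fun i => x i = false))
        (FS hm' hc v0 v u (Finset.univ.filter fun i => y i = false))
      = (Finset.univ.filter fun i => x i ≠ y i).card := by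
    intro x y
    have F := dist_formula hm' v0
      (FS hm' hc v0 v u (Finset.univ.filter fun i => x i = false))
      (FS hm' hc v0 v u (Finset.univ.filter fun i => y i = false))
    rw [← FS_union hm' hc v0 v u hle] at F
    have r1 := FS_rank hm' hc v0 v u hu_inj hle hrk (Finset.univ.filter fun i => x i = false)
    have r2 := FS_rank hm' hc v0 v u hu_inj hle hrk (Finset.univ.filter fun i => y i = false)
    have r3 := FS_rank hm' hc v0 v u hu_inj hle hrk
      ((Finset.univ.filter fun i => x i = false) ∪ (Finset.univ.filter fun i => y i = false))
    have hcard := Finset.card_union_add_card_inter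
      (Finset.univ.filter fun i => x i = false) (Finset.univ.filter fun i => y i = false)
    have heq : (Finset.univ.filter fun i => x i = false) ∪ (Finset.univ.filter fun i => y i = false)
        = ((Finset.univ.filter fun i => x i = false) ∩ (Finset.univ.filter fun i => y i = false))
          ∪ (Finset.univ.filter fun i => x i ≠ y i) := by
      ext j
      cases hx : x j <;> cases hy : y j <;>
        simp [Finset.mem_filter, Finset.mem_union, Finset.mem_inter, hx, hy]
    have hdisj : Disjoint
        ((Finset.univ.filter fun i => x i = false) ∩ (Finset.univ.filter fun i => y i = false))
        (Finset.univ.filter fun i => x i ≠ y i) := by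
      rw [Finset.disjoint_left]
      intro j hj1 hj2
      simp only [Finset.mem_filter, Finset.mem_inter, Finset.mem_univ, true_and] at hj1 hj2
      exact hj2 (hj1.1.trans hj1.2.symm)
    have hsplit : ((Finset.univ.filter fun i => x i = false) ∪ (Finset.univ.filter fun i => y i = false)).card
        = ((Finset.univ.filter fun i => x i = false) ∩ (Finset.univ.filter fun i => y i = false)).card
          + (Finset.univ.filter fun i => x i ≠ y i).card := by
      rw [heq, Finset.card_union_of_disjoint hdisj]
    omega
  -- adjacency in the cube graph
  have cube_adj : ∀ x y : Fin n → Bool,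
      (cubeGraph n).Adj x y ↔ (Finset.univ.filter fun i => x i ≠ y i).card = 1 := by
    intro x y
    constructor
    · intro h
      rw [cubeGraph, SimpleGraph.fromRel_adj] at h
      obtain ⟨hne, h | h⟩ := h <;> obtain ⟨i, hi, hall⟩ := h
      · have hfil : (Finset.univ.filter fun j => x j ≠ y j) = {i} := by
          ext j
          simp only [Finset.mem_filter, Finset.mem_univ, true_and, Finset.mem_singleton]
          constructor
          · intro hj
            by_contra hji
            exact hj (hall j hji)
          · intro hj
            subst hj
            exact hi
        rw [hfil, Finset.card_singleton]
      · have hfil : (Finset.univ.filter fun j => x j ≠ y j) = {i} := by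
          ext j
          simp only [Finset.mem_filter, Finset.mem_univ, true_and, Finset.mem_singleton]
          constructor
          · intro hj
            by_contra hji
            exact hj (hall j hji).symm
          · intro hj
            subst hj
            exact hi.symm
        rw [hfil, Finset.card_singleton]
    · intro h
      obtain ⟨i, hfil⟩ := Finset.card_eq_one.mp h
      have hmem : ∀ j : Fin n, (x j ≠ y j) ↔ j = i := by
        intro j
        rw [← Finset.mem_singleton, ← hfil]
        simp
      have hxi : x i ≠ y i := (hmem i).mpr rfl
      rw [cubeGraph, SimpleGraph.fromRel_adj]
      refine ⟨fun hxy => hxi (congrFun hxy i), Or.inl ⟨i, hxi, fun j hj => ?_⟩⟩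
      by_contra hne
      exact hj ((hmem j).mp hne)
  refine ⟨n, ⟨⟨fun x => FS hm' hc v0 v u (Finset.univ.filter fun i => x i = false), ?_⟩, ?_⟩,
    ?_, ?_⟩
  · -- injectivity
    intro x y hxy
    simp only at hxy
    have hzero := hdist x y
    rw [hxy, SimpleGraph.dist_self] at hzero
    funext i
    by_contra hne
    have hi : i ∈ Finset.univ.filter fun j => x j ≠ y j :=
      Finset.mem_filter.mpr ⟨Finset.mem_univ i, hne⟩
    have := Finset.card_eq_zero.mp hzero.symm
    rw [this] at hi
    exact absurd hi (Finset.notMem_empty i)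
  · -- adjacency iff
    intro a b
    show G.Adj (FS hm' hc v0 v u (Finset.univ.filter fun i => a i = false))
      (FS hm' hc v0 v u (Finset.univ.filter fun i => b i = false)) ↔ (cubeGraph n).Adj a b
    rw [← SimpleGraph.dist_eq_one_iff_adj, hdist a b, cube_adj a b]
  · -- v in range
    refine ⟨fun _ => true, ?_⟩
    have hempty : (Finset.univ.filter fun _ : Fin n => (true : Bool) = false) = ∅ := by
      simp
    show FS hm' hc v0 v u (Finset.univ.filter fun _ : Fin n => (true : Bool) = false) = v
    rw [hempty, FS_empty]
  · -- predecessors in range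
    intro w hw
    have hwU : w ∈ U := hPfin.mem_toFinset.mpr hw
    refine ⟨fun j => decide (j ≠ e ⟨w, hwU⟩), ?_⟩
    have hfil : (Finset.univ.filter fun j : Fin n => (decide (j ≠ e ⟨w, hwU⟩) : Bool) = false)
        = {e ⟨w, hwU⟩} := by
      ext j
      simp [decide_eq_false_iff_not]
    show FS hm' hc v0 v u
      (Finset.univ.filter fun j : Fin n => (decide (j ≠ e ⟨w, hwU⟩) : Bool) = false) = w
    rw [hfil, FS_singleton hm' hc v0 v u hle]
    show ((e.symm (e ⟨w, hwU⟩) : U) : V) = w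
    rw [Equiv.symm_apply_apply]
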